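/- Theorem 2 (linear convergence of SSI-HG under the strong MVI assumption). Suppose (w*, δ*) is a solution of the strong MVI with parameter μ > 0, and let σ, τ > 0 satisfy max{L12·(στn)^{1/2}, L11·σ} ≤ 1/3 and θ = max{ 1/(1 + μσ), (1 + (n−1)μτ/n)/(1 + μτ) }. Let (w^k, δ^k) be an SSI-HG trajectory with these parameters. Then there is a constant C ≥ 0, independent of K, such that for every K ≥ 1: n^{−(K−1)} ∑_{s ∈ {1,…,n}^{K−1}} ‖w* − w^K(s)‖² ≤ C·θ^K and n^{−K} ∑_{s ∈ {1,…,n}^K} ‖δ* − δ^K(s)‖² ≤ C·θ^K. -/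

import Mathlib

set_option maxHeartbeats 1000000


open scoped RealInnerProductSpace

/-- `γ` is a subgradient of `h` at `x`. -/
def IsSubgradient {X : Type*} [NormedAddCommGroup X] [InnerProductSpace ℝ X]
    (h : X → ℝ) (x γ : X) : Prop :=
  ∀ u, h u ≥ h x + ⟪γ, u - x⟫

/-- Given the initial point `w0` and the family `W` (where `W s` is the iterate
`w^{|s|+1}` produced after the (reversed) index history `s`), `wat w0 W s` is the iterate
`w^{|s|}` at the beginning of the step with (reversed) history `s`; it depends only on
the indices drawn strictly before the last one.  In particular `wat w0 W [] = w0 = w^0`,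
which also encodes the convention `w^{-1} = w^0` via `List.tail [] = []`. -/
def wat {n : ℕ} {E : Type*} (w0 : E) (W : List (Fin n) → E) : List (Fin n) → E
  | [] => w0
  | _ :: t => W t

section SSIHGaux

open Finset

lemma ssihg_polar {X : Type*} [NormedAddCommGroup X] [InnerProductSpace ℝ X] (x y z : X) :
    2 * ⟪x - y, x - z⟫ = ‖x - y‖ ^ 2 + ‖x - z‖ ^ 2 - ‖y - z‖ ^ 2 := by
  have h : y - z = (x - z) - (x - y) := by abel
  have e := norm_sub_sq_real (x - z) (x - y)
  rw [h, e]
  have := real_inner_comm (x - z) (x - y)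
  linarith

lemma ssihg_young (a b ε : ℝ) (hε : 0 < ε) : a * b ≤ ε * a ^ 2 + b ^ 2 / (4 * ε) := by
  have h4 : b ^ 2 / (4 * ε) * (4 * ε) = b ^ 2 := by field_simp
  nlinarith [sq_nonneg (2 * ε * a - b), hε.le]

variable {n : ℕ} {E : Type*} [NormedAddCommGroup E] [InnerProductSpace ℝ E]
variable {Fd : Fin n → Type*} [∀ i, NormedAddCommGroup (Fd i)] [∀ i, InnerProductSpace ℝ (Fd i)]

variable (Gw : E → PiLp 2 Fd → E) (w0 : E) (W : List (Fin n) → E)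
  (D : List (Fin n) → PiLp 2 Fd) (wstar : E) (δstar : PiLp 2 Fd)

def qvD (t : List (Fin n)) : E :=
  Gw (wat w0 W t.tail) (D t.tail) -
    ((n : ℝ) - 1) • (Gw (wat w0 W t) (D t) - Gw (wat w0 W t) (D t.tail))

noncomputable def MvD (t : List (Fin n)) : ℝ :=
  ⟪Gw (wat w0 W t) (D t) - qvD Gw w0 W D t, wat w0 W t - wstar⟫

noncomputable def ZvD (μ σ τ : ℝ) (t : List (Fin n)) : ℝ :=
  (1 / (2 * σ) + μ / 2) * ‖wat w0 W t - wstar‖ ^ 2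
    + ((n : ℝ) / (2 * τ) + (n : ℝ) * μ / 2) * ‖D t - δstar‖ ^ 2
    + (1 / (8 * σ)) * ‖wat w0 W t - wat w0 W t.tail‖ ^ 2
    + ((n : ℝ) / (2 * τ)) * ‖D t - D t.tail‖ ^ 2
    - MvD Gw w0 W D wstar t

lemma ssihg_rbound {L11 L12 : ℝ} (hn : 1 ≤ n)
    (hLww : ∀ (w w' : E) (δ : PiLp 2 Fd), ‖Gw w δ - Gw w' δ‖ ≤ L11 * ‖w - w'‖)
    (hLwd : ∀ (w : E) (δ δ' : PiLp 2 Fd), ‖Gw w δ - Gw w δ'‖ ≤ L12 * ‖δ - δ'‖)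
    (t : List (Fin n)) :
    ‖Gw (wat w0 W t) (D t) - qvD Gw w0 W D t‖ ≤
      L11 * ‖wat w0 W t - wat w0 W t.tail‖ + (n : ℝ) * L12 * ‖D t - D t.tail‖ := by
  set w1 := wat w0 W t
  set w0' := wat w0 W t.tail
  set d1 := D t
  set d0 := D t.tail
  have hsplit : Gw w1 d1 - qvD Gw w0 W D t =
      (Gw w1 d1 - Gw w1 d0) + (Gw w1 d0 - Gw w0' d0)
        + ((n : ℝ) - 1) • (Gw w1 d1 - Gw w1 d0) := by
    simp only [qvD]
    abel
  rw [hsplit]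
  have h1 := hLwd w1 d1 d0
  have h2 := hLww w1 w0' d0
  have h3 : ‖((n : ℝ) - 1) • (Gw w1 d1 - Gw w1 d0)‖ = ((n : ℝ) - 1) * ‖Gw w1 d1 - Gw w1 d0‖ := by
    rw [norm_smul, Real.norm_eq_abs, abs_of_nonneg (by exact_mod_cast sub_nonneg.2 (by exact_mod_cast hn : (1:ℝ) ≤ (n:ℝ)))]
  calc ‖(Gw w1 d1 - Gw w1 d0) + (Gw w1 d0 - Gw w0' d0) + ((n : ℝ) - 1) • (Gw w1 d1 - Gw w1 d0)‖
      ≤ ‖(Gw w1 d1 - Gw w1 d0)‖ + ‖(Gw w1 d0 - Gw w0' d0)‖ + ‖((n : ℝ) - 1) • (Gw w1 d1 - Gw w1 d0)‖ :=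
        norm_add₃_le
    _ ≤ L12 * ‖d1 - d0‖ + L11 * ‖w1 - w0'‖ + ((n : ℝ) - 1) * (L12 * ‖d1 - d0‖) := by
        rw [h3]
        have hn1 : (0:ℝ) ≤ (n : ℝ) - 1 := by
          have : (1:ℝ) ≤ (n:ℝ) := by exact_mod_cast hn
          linarith
        gcongr
    _ ≤ L11 * ‖w1 - w0'‖ + (n : ℝ) * L12 * ‖d1 - d0‖ := by ring_nf; nlinarith [norm_nonneg (d1 - d0)]


lemma ssihg_sum_coord {α : Type*} [AddCommMonoid α] (s0 : List (Fin n))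
    (hD : ∀ (i : Fin n) (j : Fin n), j ≠ i → D (i :: s0) j = D s0 j)
    (u : ∀ j, Fd j → α) :
    ∑ i : Fin n, ∑ j : Fin n, u j (D (i :: s0) j)
      = ∑ j : Fin n, ((n - 1) • u j (D s0 j) + u j (D (j :: s0) j)) := by
  rw [Finset.sum_comm]
  refine Finset.sum_congr rfl fun j _ => ?_
  rw [← Finset.sum_erase_add _ _ (Finset.mem_univ j)]
  congr 1
  rw [Finset.sum_congr rfl (fun i hi => by
    rw [hD i j (Ne.symm (Finset.ne_of_mem_erase hi))]),
    Finset.sum_const, Finset.card_erase_of_mem (Finset.mem_univ j),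
    Finset.card_univ, Fintype.card_fin]

lemma ssihg_normsq_pi (x y : PiLp 2 Fd) :
    ‖x - y‖ ^ 2 = ∑ i : Fin n, ‖x i - y i‖ ^ 2 := by
  rw [PiLp.norm_sq_eq_of_L2]
  exact Finset.sum_congr rfl fun i _ => by rw [PiLp.sub_apply]

lemma ssihg_key_real {n θ μ σ τ L11 L12 na na' nb nb' np' npw npd nq' m ip A1 : ℝ}
    (hn1 : 1 ≤ n) (hσ : 0 < σ) (hτ : 0 < τ)
    (h11 : σ ^ 2 * L11 ^ 2 ≤ 1 / 9) (h12 : σ * τ * n * L12 ^ 2 ≤ 1 / 9)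
    (hθ0 : 0 ≤ θ) (hθ1 : θ ≤ 1) (hθσ : 1 ≤ θ * (1 + μ * σ))
    (hθτ : n + (n - 1) * μ * τ ≤ θ * n * (1 + μ * τ))
    (H1 : μ / 2 * (na' ^ 2 + nb' ^ 2) ≤
      A1 - θ * ip - θ * m - σ⁻¹ * ((np' ^ 2 + na' ^ 2 - na ^ 2) / 2)
        - τ⁻¹ * ((nq' ^ 2 + nb' ^ 2 - nb ^ 2) / 2))
    (H7 : -ip ≤ (L11 * npw + n * L12 * npd) * np') :
    n * (1 / (2 * σ) + μ / 2) * na' ^ 2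
      + (n / (2 * τ) + n * μ / 2) * ((n - 1) * nb ^ 2 + nb' ^ 2)
      + n * (1 / (8 * σ)) * np' ^ 2 + (n / (2 * τ)) * nq' ^ 2 - n * A1
    ≤ n * θ * ((1 / (2 * σ) + μ / 2) * na ^ 2 + (n / (2 * τ) + n * μ / 2) * nb ^ 2
      + (1 / (8 * σ)) * npw ^ 2 + (n / (2 * τ)) * npd ^ 2 - m) := by
  have hn0 : (0:ℝ) ≤ n := by linarith
  have H1n := mul_le_mul_of_nonneg_left H1 hn0
  have H7n := mul_le_mul_of_nonneg_left H7 (by positivity : (0:ℝ) ≤ n * θ)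
  have Y1 := ssihg_young (L11 * npw) np' σ hσ
  have Y2 := ssihg_young (n * L12 * npd) np' (2 * σ) (by positivity)
  have Y1n := mul_le_mul_of_nonneg_left Y1 (by positivity : (0:ℝ) ≤ n * θ)
  have Y2n := mul_le_mul_of_nonneg_left Y2 (by positivity : (0:ℝ) ≤ n * θ)
  have C1 : n * (1 / (2 * σ)) * na ^ 2 ≤ n * θ * (1 / (2 * σ) + μ / 2) * na ^ 2 := by
    have h2 := mul_le_mul_of_nonneg_left hθσ
      (show (0:ℝ) ≤ n * na ^ 2 / (2 * σ) by positivity)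
    have e : n * na ^ 2 / (2 * σ) * (θ * (1 + μ * σ)) = n * θ * (1 / (2 * σ) + μ / 2) * na ^ 2 := by
      field_simp
    have e2 : n * na ^ 2 / (2 * σ) * 1 = n * (1 / (2 * σ)) * na ^ 2 := by ring
    linarith
  have C2 : n * (n / (2 * τ) + (n - 1) * μ / 2) * nb ^ 2
      ≤ n * θ * (n / (2 * τ) + n * μ / 2) * nb ^ 2 := by
    have h2 := mul_le_mul_of_nonneg_left hθτ
      (show (0:ℝ) ≤ n * nb ^ 2 / (2 * τ) by positivity)
    have e : n * nb ^ 2 / (2 * τ) * (θ * n * (1 + μ * τ))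
        = n * θ * (n / (2 * τ) + n * μ / 2) * nb ^ 2 := by
      field_simp
    have e2 : n * nb ^ 2 / (2 * τ) * (n + (n - 1) * μ * τ)
        = n * (n / (2 * τ) + (n - 1) * μ / 2) * nb ^ 2 := by
      field_simp
    linarith
  have base3 : σ * L11 ^ 2 ≤ 1 / (8 * σ) := by
    rw [le_div_iff₀ (by positivity)]; nlinarith
  have base4 : 2 * σ * n * L12 ^ 2 ≤ 1 / (2 * τ) := by
    rw [le_div_iff₀ (by positivity)]; nlinarith
  have C3n := mul_le_mul_of_nonneg_left base3 (by positivity : (0:ℝ) ≤ n * θ * npw ^ 2)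
  have C4n := mul_le_mul_of_nonneg_left base4 (by positivity : (0:ℝ) ≤ θ * n ^ 2 * npd ^ 2)
  have C5n := mul_le_mul_of_nonneg_left hθ1 (by positivity : (0:ℝ) ≤ n * np' ^ 2 * (3/8) / σ)
  ring_nf at H1n H7n Y1n Y2n C1 C2 C3n C4n C5n ⊢
  linarith [H1n, H7n, Y1n, Y2n, C1, C2, C3n, C4n, C5n]

lemma ssihg_Zlb_real {n μ σ τ L11 L12 na nb npw npd m : ℝ}
    (hn1 : 1 ≤ n) (hσ : 0 < σ) (hτ : 0 < τ) (hμ : 0 ≤ μ)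
    (h11 : σ ^ 2 * L11 ^ 2 ≤ 1 / 9) (h12 : σ * τ * n * L12 ^ 2 ≤ 1 / 9)
    (hm1 : m ≤ (L11 * npw + n * L12 * npd) * na) :
    (1 / (6 * σ)) * na ^ 2 + (n / (2 * τ)) * nb ^ 2
      ≤ (1 / (2 * σ) + μ / 2) * na ^ 2 + (n / (2 * τ) + n * μ / 2) * nb ^ 2
        + (1 / (8 * σ)) * npw ^ 2 + (n / (2 * τ)) * npd ^ 2 - m := by
  have hn0 : (0:ℝ) < n := by linarith
  have Y1 := ssihg_young npw (L11 * na) (1 / (8 * σ)) (by positivity)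
  have Y1' : (L11 * na) ^ 2 / (4 * (1 / (8 * σ))) = 2 * σ * L11 ^ 2 * na ^ 2 := by
    field_simp; ring
  have Y2 := ssihg_young npd (n * L12 * na) (n / (4 * τ)) (by positivity)
  have Y2' : (n * L12 * na) ^ 2 / (4 * (n / (4 * τ))) = τ * n * L12 ^ 2 * na ^ 2 := by
    field_simp
  have c1n : 2 * σ * L11 ^ 2 * na ^ 2 ≤ (2 / (9 * σ)) * na ^ 2 := by
    have h : 2 * σ * L11 ^ 2 ≤ 2 / (9 * σ) := by
      rw [le_div_iff₀ (by positivity)]; nlinarith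
    exact mul_le_mul_of_nonneg_right h (sq_nonneg na)
  have c2n : τ * n * L12 ^ 2 * na ^ 2 ≤ (1 / (9 * σ)) * na ^ 2 := by
    have h : τ * n * L12 ^ 2 ≤ 1 / (9 * σ) := by
      rw [le_div_iff₀ (by positivity)]; nlinarith
    exact mul_le_mul_of_nonneg_right h (sq_nonneg na)
  have e1 : (1 / (6 * σ)) * na ^ 2 + (2 / (9 * σ)) * na ^ 2 + (1 / (9 * σ)) * na ^ 2
      = (1 / (2 * σ)) * na ^ 2 := by field_simp; ring
  have s1 : (0:ℝ) ≤ μ * na ^ 2 / 2 := by positivity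
  have s2 : (0:ℝ) ≤ n * μ * nb ^ 2 / 2 := by positivity
  have s3 : (0:ℝ) ≤ n * npd ^ 2 / (4 * τ) := by positivity
  ring_nf at Y1 Y2 Y1' Y2' c1n c2n s1 s2 s3 hm1 e1 ⊢
  linarith [Y1, Y2, Y1', Y2', c1n, c2n, s1, s2, s3, hm1, e1]

lemma ssihg_key
    (hn : 1 ≤ n)
    (gw : ∀ i, E → Fd i → E) (gd : ∀ i, E → Fd i → Fd i)
    (hGw : ∀ w δ, Gw w δ = ∑ i, gw i w (δ i))
    (Gd : E → PiLp 2 Fd → PiLp 2 Fd) (hGd : ∀ w δ i, Gd w δ i = gd i w (δ i))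
    {L11 L12 : ℝ}
    (hLww : ∀ (w w' : E) (δ : PiLp 2 Fd), ‖Gw w δ - Gw w' δ‖ ≤ L11 * ‖w - w'‖)
    (hLwd : ∀ (w : E) (δ δ' : PiLp 2 Fd), ‖Gw w δ - Gw w δ'‖ ≤ L12 * ‖δ - δ'‖)
    (f : E → ℝ) (gi : ∀ i, Fd i → ℝ)
    {μ : ℝ}
    (hMVI : ∀ (w : E) (δ : PiLp 2 Fd) (γf : E) (γg : PiLp 2 Fd),
      IsSubgradient f w γf → (∀ i, IsSubgradient (gi i) (δ i) (γg i)) →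
      ⟪γf + Gw w δ, w - wstar⟫ + ⟪γg - Gd w δ, δ - δstar⟫ ≥
        (μ / 2) * (‖w - wstar‖ ^ 2 + ‖δ - δstar‖ ^ 2))
    {σ τ θ : ℝ} (hσ : 0 < σ) (hτ : 0 < τ)
    (h11 : σ ^ 2 * L11 ^ 2 ≤ 1 / 9) (h12 : σ * τ * (n : ℝ) * L12 ^ 2 ≤ 1 / 9)
    (hθ0 : 0 ≤ θ) (hθ1 : θ ≤ 1) (hθσ : 1 ≤ θ * (1 + μ * σ))
    (hθτ : (n : ℝ) + ((n : ℝ) - 1) * μ * τ ≤ θ * (n : ℝ) * (1 + μ * τ))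
    (hupw : ∀ s : List (Fin n), ∃ γf : E, IsSubgradient f (W s) γf ∧
      (0 : E) = γf + σ⁻¹ • (W s - wat w0 W s) + Gw (wat w0 W s) (D s)
        + θ • (Gw (wat w0 W s) (D s)
          - (Gw (wat w0 W s.tail) (D s.tail)
            - ((n : ℝ) - 1) • (Gw (wat w0 W s) (D s) - Gw (wat w0 W s) (D s.tail)))))
    (hupd : ∀ (s : List (Fin n)) (i : Fin n),
      (∀ j, j ≠ i → D (i :: s) j = D s j) ∧
      ∃ γ : Fd i, IsSubgradient (gi i) (D (i :: s) i) γ ∧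
        (0 : Fd i) = γ + τ⁻¹ • (D (i :: s) i - D s i) - gd i (W s) (D (i :: s) i))
    (s : List (Fin n)) :
    ∑ i : Fin n, ZvD Gw w0 W D wstar δstar μ σ τ (i :: s)
      ≤ (n : ℝ) * θ * ZvD Gw w0 W D wstar δstar μ σ τ s := by
  have hn1 : (1 : ℝ) ≤ (n : ℝ) := by exact_mod_cast hn
  obtain ⟨γf, hγfs, hγfe⟩ := hupw s
  choose γg hγgs hγge using fun i => (hupd s i).2
  have hDco : ∀ (i : Fin n) (j : Fin n), j ≠ i → D (i :: s) j = D s j := fun i => (hupd s i).1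
  set dh : PiLp 2 Fd := WithLp.toLp 2 (fun i => D (i :: s) i) with hdh
  let γgp : PiLp 2 Fd := WithLp.toLp 2 γg
  have hMV := hMVI (W s) dh γf γgp hγfs (fun i => hγgs i)
  -- closed form for γf
  have hγf2 : γf = (0 : E) - σ⁻¹ • (W s - wat w0 W s) - Gw (wat w0 W s) (D s)
      - θ • (Gw (wat w0 W s) (D s) - qvD Gw w0 W D s) := by
    simp only [qvD]
    rw [hγfe]; abel
  have hip1 : ⟪γf + Gw (W s) dh, W s - wstar⟫
      = ⟪Gw (W s) dh - Gw (wat w0 W s) (D s), W s - wstar⟫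
        - θ * ⟪Gw (wat w0 W s) (D s) - qvD Gw w0 W D s, W s - wstar⟫
        - σ⁻¹ * ⟪W s - wat w0 W s, W s - wstar⟫ := by
    rw [hγf2]
    simp only [inner_sub_left, inner_add_left, inner_zero_left, real_inner_smul_left]
    ring
  have hip2 : ⟪γgp - Gd (W s) dh, dh - δstar⟫ = -(τ⁻¹ * ⟪dh - D s, dh - δstar⟫) := by
    rw [PiLp.inner_apply, PiLp.inner_apply, Finset.mul_sum, ← Finset.sum_neg_distrib]
    refine Finset.sum_congr rfl fun i _ => ?_
    simp only [PiLp.sub_apply]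
    have hdhi : dh i = D (i :: s) i := rfl
    have h2 : γgp i - Gd (W s) dh i = -(τ⁻¹ • (dh i - D s i)) := by
      rw [hGd]
      have h3 : γgp i = (0 : Fd i) - τ⁻¹ • (D (i :: s) i - D s i)
          + gd i (W s) (D (i :: s) i) := by rw [hγge i]; abel
      rw [hdhi, h3]; abel
    rw [h2, inner_neg_left, real_inner_smul_left]
  have hsplit : ⟪Gw (wat w0 W s) (D s) - qvD Gw w0 W D s, W s - wstar⟫
      = ⟪Gw (wat w0 W s) (D s) - qvD Gw w0 W D s, W s - wat w0 W s⟫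
        + MvD Gw w0 W D wstar s := by
    simp only [MvD]
    rw [← inner_add_right]
    congr 1
    abel
  have iw_eq : ⟪W s - wat w0 W s, W s - wstar⟫
      = (‖W s - wat w0 W s‖ ^ 2 + ‖W s - wstar‖ ^ 2 - ‖wat w0 W s - wstar‖ ^ 2) / 2 := by
    have := ssihg_polar (W s) (wat w0 W s) wstar; linarith
  have id_eq : ⟪dh - D s, dh - δstar⟫
      = (‖dh - D s‖ ^ 2 + ‖dh - δstar‖ ^ 2 - ‖D s - δstar‖ ^ 2) / 2 := by
    have := ssihg_polar dh (D s) δstar; linarith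
  rw [hip1, hip2, hsplit, iw_eq, id_eq] at hMV
  -- coordinate sums
  have hF5 : ∑ i : Fin n, ‖D (i :: s) - D s‖ ^ 2 = ‖dh - D s‖ ^ 2 := by
    have e := ssihg_sum_coord D s hDco (fun j x => ‖x - D s j‖ ^ 2)
    calc ∑ i : Fin n, ‖D (i :: s) - D s‖ ^ 2
        = ∑ i : Fin n, ∑ j : Fin n, ‖D (i :: s) j - D s j‖ ^ 2 :=
          Finset.sum_congr rfl fun i _ => ssihg_normsq_pi _ _
      _ = ∑ j : Fin n, ((n - 1) • ‖D s j - D s j‖ ^ 2 + ‖D (j :: s) j - D s j‖ ^ 2) := e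
      _ = ∑ j : Fin n, ‖dh j - D s j‖ ^ 2 := by
          refine Finset.sum_congr rfl fun j _ => ?_
          rw [sub_self, norm_zero]
          norm_num
          rfl
      _ = ‖dh - D s‖ ^ 2 := (ssihg_normsq_pi _ _).symm
  have hF6 : ∑ i : Fin n, ‖D (i :: s) - δstar‖ ^ 2
      = ((n : ℝ) - 1) * ‖D s - δstar‖ ^ 2 + ‖dh - δstar‖ ^ 2 := by
    have e := ssihg_sum_coord D s hDco (fun j x => ‖x - δstar j‖ ^ 2)
    calc ∑ i : Fin n, ‖D (i :: s) - δstar‖ ^ 2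
        = ∑ i : Fin n, ∑ j : Fin n, ‖D (i :: s) j - δstar j‖ ^ 2 :=
          Finset.sum_congr rfl fun i _ => ssihg_normsq_pi _ _
      _ = ∑ j : Fin n, ((n - 1) • ‖D s j - δstar j‖ ^ 2 + ‖D (j :: s) j - δstar j‖ ^ 2) := e
      _ = ((n : ℝ) - 1) * ‖D s - δstar‖ ^ 2 + ‖dh - δstar‖ ^ 2 := by
          rw [Finset.sum_add_distrib]
          congr 1
          · rw [← Finset.smul_sum, ← ssihg_normsq_pi, nsmul_eq_mul, Nat.cast_sub hn,
              Nat.cast_one]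
          · exact (ssihg_normsq_pi dh δstar).symm
  -- sum of MvD over next step
  have hq : ∀ i : Fin n, qvD Gw w0 W D (i :: s)
      = Gw (wat w0 W s) (D s)
        - ((n : ℝ) - 1) • (Gw (W s) (D (i :: s)) - Gw (W s) (D s)) := fun i => rfl
  have hS : ∑ i : Fin n, Gw (W s) (D (i :: s))
      = ((n : ℝ) - 1) • Gw (W s) (D s) + Gw (W s) dh := by
    calc ∑ i : Fin n, Gw (W s) (D (i :: s))
        = ∑ i : Fin n, ∑ j : Fin n, gw j (W s) (D (i :: s) j) :=
          Finset.sum_congr rfl fun i _ => hGw _ _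
      _ = ∑ j : Fin n, ((n - 1) • gw j (W s) (D s j) + gw j (W s) (D (j :: s) j)) :=
          ssihg_sum_coord D s hDco _
      _ = ((n : ℝ) - 1) • Gw (W s) (D s) + Gw (W s) dh := by
          rw [Finset.sum_add_distrib, ← Finset.smul_sum, ← hGw,
            ← Nat.cast_smul_eq_nsmul ℝ, Nat.cast_sub hn, Nat.cast_one]
          congr 1
          exact (hGw (W s) dh).symm
  have hsum : ∑ i : Fin n, (Gw (W s) (D (i :: s)) - qvD Gw w0 W D (i :: s))
      = (n : ℝ) • (Gw (W s) dh - Gw (wat w0 W s) (D s)) := by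
    calc ∑ i : Fin n, (Gw (W s) (D (i :: s)) - qvD Gw w0 W D (i :: s))
        = ∑ i : Fin n, ((n : ℝ) • Gw (W s) (D (i :: s))
            - Gw (wat w0 W s) (D s) - ((n : ℝ) - 1) • Gw (W s) (D s)) := by
          refine Finset.sum_congr rfl fun i _ => ?_
          rw [hq i]
          module
      _ = (n : ℝ) • (∑ i : Fin n, Gw (W s) (D (i :: s)))
            - (n : ℕ) • Gw (wat w0 W s) (D s)
            - (n : ℕ) • (((n : ℝ) - 1) • Gw (W s) (D s)) := by
          rw [Finset.sum_sub_distrib, Finset.sum_sub_distrib, Finset.sum_const,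
            Finset.sum_const, Finset.card_univ, Fintype.card_fin, Finset.smul_sum]
      _ = (n : ℝ) • (Gw (W s) dh - Gw (wat w0 W s) (D s)) := by
          rw [hS, ← Nat.cast_smul_eq_nsmul ℝ (n) (Gw (wat w0 W s) (D s)),
            ← Nat.cast_smul_eq_nsmul ℝ (n) (((n : ℝ) - 1) • Gw (W s) (D s))]
          module
  have hSv : ∑ i : Fin n, MvD Gw w0 W D wstar (i :: s)
      = (n : ℝ) * ⟪Gw (W s) dh - Gw (wat w0 W s) (D s), W s - wstar⟫ := by
    calc ∑ i : Fin n, MvD Gw w0 W D wstar (i :: s)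
        = ∑ i : Fin n, ⟪Gw (W s) (D (i :: s)) - qvD Gw w0 W D (i :: s), W s - wstar⟫ :=
          Finset.sum_congr rfl fun i _ => rfl
      _ = ⟪∑ i : Fin n, (Gw (W s) (D (i :: s)) - qvD Gw w0 W D (i :: s)), W s - wstar⟫ :=
          (sum_inner _ _ _).symm
      _ = (n : ℝ) * ⟪Gw (W s) dh - Gw (wat w0 W s) (D s), W s - wstar⟫ := by
          rw [hsum, real_inner_smul_left]
  -- cross term bound
  have H7 : -⟪Gw (wat w0 W s) (D s) - qvD Gw w0 W D s, W s - wat w0 W s⟫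
      ≤ (L11 * ‖wat w0 W s - wat w0 W s.tail‖ + (n : ℝ) * L12 * ‖D s - D s.tail‖)
        * ‖W s - wat w0 W s‖ := by
    have h1 : -⟪Gw (wat w0 W s) (D s) - qvD Gw w0 W D s, W s - wat w0 W s⟫
        ≤ ‖Gw (wat w0 W s) (D s) - qvD Gw w0 W D s‖ * ‖W s - wat w0 W s‖ := by
      rw [← inner_neg_left]
      exact (real_inner_le_norm _ _).trans (by rw [norm_neg])
    exact h1.trans (mul_le_mul_of_nonneg_right (ssihg_rbound Gw w0 W D hn hLww hLwd s)
      (norm_nonneg _))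
  -- expansion of the sum of ZvD over the next step
  have hexp : ∑ i : Fin n, ZvD Gw w0 W D wstar δstar μ σ τ (i :: s)
      = (n : ℝ) * (1 / (2 * σ) + μ / 2) * ‖W s - wstar‖ ^ 2
        + ((n : ℝ) / (2 * τ) + (n : ℝ) * μ / 2) * (∑ i : Fin n, ‖D (i :: s) - δstar‖ ^ 2)
        + (n : ℝ) * (1 / (8 * σ)) * ‖W s - wat w0 W s‖ ^ 2
        + ((n : ℝ) / (2 * τ)) * (∑ i : Fin n, ‖D (i :: s) - D s‖ ^ 2)
        - ∑ i : Fin n, MvD Gw w0 W D wstar (i :: s) := by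
    simp only [ZvD, wat, List.tail_cons]
    rw [Finset.sum_sub_distrib, Finset.sum_add_distrib, Finset.sum_add_distrib,
      Finset.sum_add_distrib, Finset.sum_const, Finset.sum_const, Finset.card_univ,
      Fintype.card_fin, ← Finset.mul_sum, ← Finset.mul_sum, nsmul_eq_mul, nsmul_eq_mul]
    ring
  -- final assembly
  rw [hexp, hF5, hF6, hSv]
  have hgoal := ssihg_key_real (na := ‖wat w0 W s - wstar‖) (na' := ‖W s - wstar‖)
    (nb := ‖D s - δstar‖) (nb' := ‖dh - δstar‖) (np' := ‖W s - wat w0 W s‖)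
    (npw := ‖wat w0 W s - wat w0 W s.tail‖) (npd := ‖D s - D s.tail‖)
    (nq' := ‖dh - D s‖) (m := MvD Gw w0 W D wstar s)
    (ip := ⟪Gw (wat w0 W s) (D s) - qvD Gw w0 W D s, W s - wat w0 W s⟫)
    (A1 := ⟪Gw (W s) dh - Gw (wat w0 W s) (D s), W s - wstar⟫)
    hn1 hσ hτ h11 h12 hθ0 hθ1 hθσ hθτ (by linarith [hMV]) H7
  calc (n : ℝ) * (1 / (2 * σ) + μ / 2) * ‖W s - wstar‖ ^ 2
        + ((n : ℝ) / (2 * τ) + (n : ℝ) * μ / 2)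
          * (((n : ℝ) - 1) * ‖D s - δstar‖ ^ 2 + ‖dh - δstar‖ ^ 2)
        + (n : ℝ) * (1 / (8 * σ)) * ‖W s - wat w0 W s‖ ^ 2
        + ((n : ℝ) / (2 * τ)) * ‖dh - D s‖ ^ 2
        - (n : ℝ) * ⟪Gw (W s) dh - Gw (wat w0 W s) (D s), W s - wstar⟫
      ≤ (n : ℝ) * θ * ((1 / (2 * σ) + μ / 2) * ‖wat w0 W s - wstar‖ ^ 2
          + ((n : ℝ) / (2 * τ) + (n : ℝ) * μ / 2) * ‖D s - δstar‖ ^ 2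
          + (1 / (8 * σ)) * ‖wat w0 W s - wat w0 W s.tail‖ ^ 2
          + ((n : ℝ) / (2 * τ)) * ‖D s - D s.tail‖ ^ 2
          - MvD Gw w0 W D wstar s) := by linarith [hgoal]
    _ = (n : ℝ) * θ * ZvD Gw w0 W D wstar δstar μ σ τ s := by simp only [ZvD]

end SSIHGaux

/-- Theorem 2: linear convergence of SSI-HG under the strong MVI assumption.
Index histories are encoded as lists in reverse chronological order (most recent index
first); `W s = w^{|s|+1}(s)`, `D s = δ^{|s|}(s)` (so `D [] = δ^0`), and the expectation
over the uniformly random i.i.d. index sequence is the finite average over all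
histories. -/


theorem ssihg_linear_convergence_strong_mvi
    {n : ℕ} (hn : 1 ≤ n)
    {E : Type*} [NormedAddCommGroup E] [InnerProductSpace ℝ E] [FiniteDimensional ℝ E]
    {Fd : Fin n → Type*} [∀ i, NormedAddCommGroup (Fd i)]
    [∀ i, InnerProductSpace ℝ (Fd i)] [∀ i, FiniteDimensional ℝ (Fd i)]
    (φ : ∀ i, E → Fd i → ℝ)
    (gw : ∀ i, E → Fd i → E) (gd : ∀ i, E → Fd i → Fd i)
    (hgw : ∀ (i : Fin n) (w : E) (d : Fd i),
      HasGradientAt (fun w' => φ i w' d) (gw i w d) w)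
    (hgd : ∀ (i : Fin n) (w : E) (d : Fd i),
      HasGradientAt (fun d' => φ i w d') (gd i w d) d)
    (Gw : E → PiLp 2 Fd → E)
    (hGw : ∀ w δ, Gw w δ = ∑ i, gw i w (δ i))
    (Gd : E → PiLp 2 Fd → PiLp 2 Fd)
    (hGd : ∀ w δ i, Gd w δ i = gd i w (δ i))
    (L11 L12 L22 : ℝ) (hL11 : 0 < L11) (hL12 : 0 < L12) (hL22 : 0 < L22)
    (hLww : ∀ (w w' : E) (δ : PiLp 2 Fd), ‖Gw w δ - Gw w' δ‖ ≤ L11 * ‖w - w'‖)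
    (hLdw : ∀ (w w' : E) (δ : PiLp 2 Fd), ‖Gd w δ - Gd w' δ‖ ≤ L12 * ‖w - w'‖)
    (hLwd : ∀ (w : E) (δ δ' : PiLp 2 Fd), ‖Gw w δ - Gw w δ'‖ ≤ L12 * ‖δ - δ'‖)
    (hLdd : ∀ (w : E) (δ δ' : PiLp 2 Fd), ‖Gd w δ - Gd w δ'‖ ≤ L22 * ‖δ - δ'‖)
    (f : E → ℝ) (hf : ConvexOn ℝ Set.univ f)
    (gi : ∀ i, Fd i → ℝ) (hgi : ∀ i, ConvexOn ℝ Set.univ (gi i))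
    (wstar : E) (δstar : PiLp 2 Fd) (μ : ℝ) (hμ : 0 < μ)
    (hMVI : ∀ (w : E) (δ : PiLp 2 Fd) (γf : E) (γg : PiLp 2 Fd),
      IsSubgradient f w γf → (∀ i, IsSubgradient (gi i) (δ i) (γg i)) →
      ⟪γf + Gw w δ, w - wstar⟫ + ⟪γg - Gd w δ, δ - δstar⟫ ≥
        (μ / 2) * (‖w - wstar‖ ^ 2 + ‖δ - δstar‖ ^ 2))
    (σ τ : ℝ) (hσ : 0 < σ) (hτ : 0 < τ)
    (hstep : max (L12 * Real.sqrt (σ * τ * (n : ℝ))) (L11 * σ) ≤ 1 / 3)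
    (θ : ℝ)
    (hθ : θ = max (1 / (1 + μ * σ))
      ((1 + ((n : ℝ) - 1) * μ * τ / (n : ℝ)) / (1 + μ * τ)))
    (w0 : E) (W : List (Fin n) → E) (D : List (Fin n) → PiLp 2 Fd)
    (hupw : ∀ s : List (Fin n), ∃ γf : E, IsSubgradient f (W s) γf ∧
      (0 : E) = γf + σ⁻¹ • (W s - wat w0 W s) + Gw (wat w0 W s) (D s)
        + θ • (Gw (wat w0 W s) (D s)
          - (Gw (wat w0 W s.tail) (D s.tail)
            - ((n : ℝ) - 1) • (Gw (wat w0 W s) (D s) - Gw (wat w0 W s) (D s.tail)))))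
    (hupd : ∀ (s : List (Fin n)) (i : Fin n),
      (∀ j, j ≠ i → D (i :: s) j = D s j) ∧
      ∃ γ : Fd i, IsSubgradient (gi i) (D (i :: s) i) γ ∧
        (0 : Fd i) = γ + τ⁻¹ • (D (i :: s) i - D s i) - gd i (W s) (D (i :: s) i)) :
    ∃ C : ℝ, 0 ≤ C ∧ ∀ K : ℕ, 1 ≤ K →
      ((n : ℝ) ^ (K - 1))⁻¹ *
          (∑ s : Fin (K - 1) → Fin n, ‖wstar - W (List.ofFn s)‖ ^ 2) ≤ C * θ ^ K ∧
      ((n : ℝ) ^ K)⁻¹ *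
          (∑ s : Fin K → Fin n, ‖δstar - D (List.ofFn s)‖ ^ 2) ≤ C * θ ^ K := by
  classical
  have hn1 : (1 : ℝ) ≤ (n : ℝ) := by exact_mod_cast hn
  have hn0 : (0 : ℝ) < (n : ℝ) := by linarith
  have hμσ : (0 : ℝ) < 1 + μ * σ := by positivity
  have hμτ : (0 : ℝ) < 1 + μ * τ := by positivity
  -- θ facts
  have hθσ : 1 ≤ θ * (1 + μ * σ) := by
    have h := le_max_left (1 / (1 + μ * σ))
      ((1 + ((n : ℝ) - 1) * μ * τ / (n : ℝ)) / (1 + μ * τ))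
    rw [← hθ, div_le_iff₀ hμσ] at h
    linarith [mul_le_mul_of_nonneg_right h (le_of_lt hμσ)]
  have hθτ : (n : ℝ) + ((n : ℝ) - 1) * μ * τ ≤ θ * (n : ℝ) * (1 + μ * τ) := by
    have h := le_max_right (1 / (1 + μ * σ))
      ((1 + ((n : ℝ) - 1) * μ * τ / (n : ℝ)) / (1 + μ * τ))
    rw [← hθ, div_le_iff₀ hμτ] at h
    have h2 := mul_le_mul_of_nonneg_left h hn0.le
    have e : (n : ℝ) * (1 + ((n : ℝ) - 1) * μ * τ / (n : ℝ))
        = (n : ℝ) + ((n : ℝ) - 1) * μ * τ := by field_simp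
    rw [e] at h2
    calc (n : ℝ) + ((n : ℝ) - 1) * μ * τ ≤ (n : ℝ) * (θ * (1 + μ * τ)) := h2
      _ = θ * (n : ℝ) * (1 + μ * τ) := by ring
  have hθ0 : 0 < θ := by
    rw [hθ]
    exact lt_max_of_lt_left (by positivity)
  have hθ1 : θ ≤ 1 := by
    rw [hθ]
    apply max_le
    · rw [div_le_one hμσ]
      nlinarith
    · rw [div_le_one hμτ]
      have h : ((n : ℝ) - 1) * μ * τ / (n : ℝ) ≤ μ * τ := by
        rw [div_le_iff₀ hn0]
        nlinarith
      linarith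
  -- step-size facts
  have hs1 : L12 * Real.sqrt (σ * τ * (n : ℝ)) ≤ 1 / 3 := (le_max_left _ _).trans hstep
  have hs2 : L11 * σ ≤ 1 / 3 := (le_max_right _ _).trans hstep
  have h11 : σ ^ 2 * L11 ^ 2 ≤ 1 / 9 := by nlinarith [mul_pos hL11 hσ]
  have h12 : σ * τ * (n : ℝ) * L12 ^ 2 ≤ 1 / 9 := by
    have hq := Real.sq_sqrt (show (0 : ℝ) ≤ σ * τ * (n : ℝ) by positivity)
    nlinarith [Real.sqrt_nonneg (σ * τ * (n : ℝ)), hL12.le,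
      mul_nonneg hL12.le (Real.sqrt_nonneg (σ * τ * (n : ℝ)))]
  set Z : List (Fin n) → ℝ := ZvD Gw w0 W D wstar δstar μ σ τ with hZdef
  have key : ∀ s : List (Fin n), ∑ i : Fin n, Z (i :: s) ≤ (n : ℝ) * θ * Z s :=
    fun s => ssihg_key Gw w0 W D wstar δstar hn gw gd hGw Gd hGd hLww hLwd f gi hMVI
      hσ hτ h11 h12 hθ0.le hθ1 hθσ hθτ hupw hupd s
  have lb : ∀ t : List (Fin n),
      (1 / (6 * σ)) * ‖wat w0 W t - wstar‖ ^ 2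
        + ((n : ℝ) / (2 * τ)) * ‖D t - δstar‖ ^ 2 ≤ Z t := by
    intro t
    have hm0 : MvD Gw w0 W D wstar t
        = ⟪Gw (wat w0 W t) (D t) - qvD Gw w0 W D t, wat w0 W t - wstar⟫ := rfl
    have hm1 : MvD Gw w0 W D wstar t ≤
        (L11 * ‖wat w0 W t - wat w0 W t.tail‖ + (n : ℝ) * L12 * ‖D t - D t.tail‖)
          * ‖wat w0 W t - wstar‖ := by
      rw [hm0]
      exact (real_inner_le_norm _ _).trans (mul_le_mul_of_nonneg_right
        (ssihg_rbound Gw w0 W D hn hLww hLwd t) (norm_nonneg _))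
    exact ssihg_Zlb_real hn1 hσ hτ hμ.le h11 h12 hm1
  -- expectation sums
  set SZ : ℕ → ℝ := fun k => ((n : ℝ) ^ k)⁻¹ * ∑ s : Fin k → Fin n, Z (List.ofFn s)
    with hSZdef
  have hreidx : ∀ (k : ℕ) (g : List (Fin n) → ℝ),
      ∑ s : Fin (k + 1) → Fin n, g (List.ofFn s)
        = ∑ t : Fin k → Fin n, ∑ i : Fin n, g (i :: List.ofFn t) := by
    intro k g
    calc ∑ s : Fin (k + 1) → Fin n, g (List.ofFn s)
        = ∑ p : Fin n × (Fin k → Fin n), g (p.1 :: List.ofFn p.2) :=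
          Fintype.sum_equiv (Fin.consEquiv (fun _ => Fin n)).symm _ _
            (fun s => by rw [List.ofFn_succ]; rfl)
      _ = ∑ i : Fin n, ∑ t : Fin k → Fin n, g (i :: List.ofFn t) := by exact Fintype.sum_prod_type _
      _ = ∑ t : Fin k → Fin n, ∑ i : Fin n, g (i :: List.ofFn t) := Finset.sum_comm
  have hrec : ∀ k : ℕ, SZ (k + 1) ≤ θ * SZ k := by
    intro k
    have h1 := hreidx k Z
    have h2 : ∑ t : Fin k → Fin n, ∑ i : Fin n, Z (i :: List.ofFn t)
        ≤ ∑ t : Fin k → Fin n, (n : ℝ) * θ * Z (List.ofFn t) :=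
      Finset.sum_le_sum fun t _ => key _
    rw [← Finset.mul_sum] at h2
    have h3 : SZ (k + 1) ≤ ((n : ℝ) ^ (k + 1))⁻¹
        * ((n : ℝ) * θ * ∑ t : Fin k → Fin n, Z (List.ofFn t)) := by
      rw [hSZdef]
      exact mul_le_mul_of_nonneg_left (by rw [h1]; exact h2) (by positivity)
    have h4 : ((n : ℝ) ^ (k + 1))⁻¹
        * ((n : ℝ) * θ * ∑ t : Fin k → Fin n, Z (List.ofFn t)) = θ * SZ k := by
      rw [hSZdef, pow_succ]
      field_simp
    linarith [h3, h4.le, h4.ge]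
  have hgeo : ∀ K : ℕ, SZ K ≤ θ ^ K * SZ 0 := by
    intro K
    induction K with
    | zero => simp
    | succ k ih =>
      calc SZ (k + 1) ≤ θ * SZ k := hrec k
        _ ≤ θ * (θ ^ k * SZ 0) := mul_le_mul_of_nonneg_left ih hθ0.le
        _ = θ ^ (k + 1) * SZ 0 := by ring
  have hSZ0 : SZ 0 = Z [] := by
    rw [hSZdef]
    simp
  have hZnil : 0 ≤ Z [] := by
    have := lb []
    have h0 : (0:ℝ) ≤ (1 / (6 * σ)) * ‖wat w0 W [] - wstar‖ ^ 2
        + ((n : ℝ) / (2 * τ)) * ‖D [] - δstar‖ ^ 2 := by positivity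
    linarith
  have hlbA : ∀ k : ℕ, (1 / (6 * σ)) * (((n : ℝ) ^ k)⁻¹
      * ∑ s : Fin k → Fin n, ‖wat w0 W (List.ofFn s) - wstar‖ ^ 2) ≤ SZ k := by
    intro k
    rw [hSZdef]
    have h1 : ∑ s : Fin k → Fin n, (1 / (6 * σ)) * ‖wat w0 W (List.ofFn s) - wstar‖ ^ 2
        ≤ ∑ s : Fin k → Fin n, Z (List.ofFn s) := by
      refine Finset.sum_le_sum fun s _ => ?_
      have := lb (List.ofFn s)
      have h0 : (0:ℝ) ≤ ((n : ℝ) / (2 * τ)) * ‖D (List.ofFn s) - δstar‖ ^ 2 := by positivity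
      linarith
    calc (1 / (6 * σ)) * (((n : ℝ) ^ k)⁻¹
          * ∑ s : Fin k → Fin n, ‖wat w0 W (List.ofFn s) - wstar‖ ^ 2)
        = ((n : ℝ) ^ k)⁻¹
          * ∑ s : Fin k → Fin n, (1 / (6 * σ)) * ‖wat w0 W (List.ofFn s) - wstar‖ ^ 2 := by
          rw [← Finset.mul_sum]
          ring
      _ ≤ ((n : ℝ) ^ k)⁻¹ * ∑ s : Fin k → Fin n, Z (List.ofFn s) :=
          mul_le_mul_of_nonneg_left h1 (by positivity)
  have hlbB : ∀ k : ℕ, ((n : ℝ) / (2 * τ)) * (((n : ℝ) ^ k)⁻¹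
      * ∑ s : Fin k → Fin n, ‖D (List.ofFn s) - δstar‖ ^ 2) ≤ SZ k := by
    intro k
    rw [hSZdef]
    have h1 : ∑ s : Fin k → Fin n, ((n : ℝ) / (2 * τ)) * ‖D (List.ofFn s) - δstar‖ ^ 2
        ≤ ∑ s : Fin k → Fin n, Z (List.ofFn s) := by
      refine Finset.sum_le_sum fun s _ => ?_
      have := lb (List.ofFn s)
      have h0 : (0:ℝ) ≤ (1 / (6 * σ)) * ‖wat w0 W (List.ofFn s) - wstar‖ ^ 2 := by positivity
      linarith
    calc ((n : ℝ) / (2 * τ)) * (((n : ℝ) ^ k)⁻¹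
          * ∑ s : Fin k → Fin n, ‖D (List.ofFn s) - δstar‖ ^ 2)
        = ((n : ℝ) ^ k)⁻¹
          * ∑ s : Fin k → Fin n, ((n : ℝ) / (2 * τ)) * ‖D (List.ofFn s) - δstar‖ ^ 2 := by
          rw [← Finset.mul_sum]
          ring
      _ ≤ ((n : ℝ) ^ k)⁻¹ * ∑ s : Fin k → Fin n, Z (List.ofFn s) :=
          mul_le_mul_of_nonneg_left h1 (by positivity)
  refine ⟨max (6 * σ) (2 * τ / (n : ℝ)) * Z [], ?_, ?_⟩
  · have : (0:ℝ) ≤ max (6 * σ) (2 * τ / (n : ℝ)) :=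
      le_trans (by positivity) (le_max_left _ _)
    exact mul_nonneg this hZnil
  intro K hK
  obtain ⟨m, rfl⟩ : ∃ m, K = m + 1 := ⟨K - 1, (Nat.succ_pred_eq_of_pos hK).symm⟩
  have hKm : m + 1 - 1 = m := rfl
  have hθK : (0:ℝ) ≤ θ ^ (m + 1) := by positivity
  constructor
  · -- primal bound
    have hA : ((n : ℝ) ^ (m + 1))⁻¹
        * ∑ s : Fin (m + 1) → Fin n, ‖wat w0 W (List.ofFn s) - wstar‖ ^ 2
        = ((n : ℝ) ^ m)⁻¹ * ∑ t : Fin m → Fin n, ‖wstar - W (List.ofFn t)‖ ^ 2 := by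
      rw [hreidx m (fun t => ‖wat w0 W t - wstar‖ ^ 2)]
      have h1 : ∀ t : Fin m → Fin n, ∑ i : Fin n, ‖wat w0 W (i :: List.ofFn t) - wstar‖ ^ 2
          = (n : ℝ) * ‖wstar - W (List.ofFn t)‖ ^ 2 := by
        intro t
        rw [Finset.sum_congr rfl (fun i _ => by
          rw [show wat w0 W (i :: List.ofFn t) = W (List.ofFn t) from rfl, norm_sub_rev]),
          Finset.sum_const, Finset.card_univ, Fintype.card_fin, nsmul_eq_mul]
      rw [Finset.sum_congr rfl fun t _ => h1 t, ← Finset.mul_sum, pow_succ]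
      field_simp
    rw [hKm, ← hA]
    have h2 := hlbA (m + 1)
    have h3 : SZ (m + 1) ≤ θ ^ (m + 1) * Z [] := by
      have := hgeo (m + 1)
      rw [hSZ0] at this
      exact this
    have h4 : (6 * σ) * Z [] ≤ max (6 * σ) (2 * τ / (n : ℝ)) * Z [] :=
      mul_le_mul_of_nonneg_right (le_max_left _ _) hZnil
    have h5 : ((n : ℝ) ^ (m + 1))⁻¹
        * ∑ s : Fin (m + 1) → Fin n, ‖wat w0 W (List.ofFn s) - wstar‖ ^ 2
        ≤ (6 * σ) * (θ ^ (m + 1) * Z []) := by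
      have h6 := h2.trans h3
      have h7 := mul_le_mul_of_nonneg_left h6 (show (0:ℝ) ≤ 6 * σ by positivity)
      calc ((n : ℝ) ^ (m + 1))⁻¹
            * ∑ s : Fin (m + 1) → Fin n, ‖wat w0 W (List.ofFn s) - wstar‖ ^ 2
          = (6 * σ) * ((1 / (6 * σ)) * (((n : ℝ) ^ (m + 1))⁻¹
              * ∑ s : Fin (m + 1) → Fin n, ‖wat w0 W (List.ofFn s) - wstar‖ ^ 2)) := by
            field_simp
        _ ≤ (6 * σ) * (θ ^ (m + 1) * Z []) := h7
    calc ((n : ℝ) ^ (m + 1))⁻¹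
          * ∑ s : Fin (m + 1) → Fin n, ‖wat w0 W (List.ofFn s) - wstar‖ ^ 2
        ≤ (6 * σ) * (θ ^ (m + 1) * Z []) := h5
      _ = ((6 * σ) * Z []) * θ ^ (m + 1) := by ring
      _ ≤ (max (6 * σ) (2 * τ / (n : ℝ)) * Z []) * θ ^ (m + 1) :=
          mul_le_mul_of_nonneg_right h4 hθK
  · -- dual bound
    have hB : ∑ s : Fin (m + 1) → Fin n, ‖δstar - D (List.ofFn s)‖ ^ 2
        = ∑ s : Fin (m + 1) → Fin n, ‖D (List.ofFn s) - δstar‖ ^ 2 :=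
      Finset.sum_congr rfl fun s _ => by rw [norm_sub_rev]
    rw [hB]
    have h2 := hlbB (m + 1)
    have h3 : SZ (m + 1) ≤ θ ^ (m + 1) * Z [] := by
      have := hgeo (m + 1)
      rw [hSZ0] at this
      exact this
    have h4 : (2 * τ / (n : ℝ)) * Z [] ≤ max (6 * σ) (2 * τ / (n : ℝ)) * Z [] :=
      mul_le_mul_of_nonneg_right (le_max_right _ _) hZnil
    have h5 : ((n : ℝ) ^ (m + 1))⁻¹
        * ∑ s : Fin (m + 1) → Fin n, ‖D (List.ofFn s) - δstar‖ ^ 2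
        ≤ (2 * τ / (n : ℝ)) * (θ ^ (m + 1) * Z []) := by
      have h6 := h2.trans h3
      have h7 := mul_le_mul_of_nonneg_left h6 (show (0:ℝ) ≤ 2 * τ / (n : ℝ) by positivity)
      calc ((n : ℝ) ^ (m + 1))⁻¹
            * ∑ s : Fin (m + 1) → Fin n, ‖D (List.ofFn s) - δstar‖ ^ 2
          = (2 * τ / (n : ℝ)) * (((n : ℝ) / (2 * τ)) * (((n : ℝ) ^ (m + 1))⁻¹
              * ∑ s : Fin (m + 1) → Fin n, ‖D (List.ofFn s) - δstar‖ ^ 2)) := by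
            field_simp
        _ ≤ (2 * τ / (n : ℝ)) * (θ ^ (m + 1) * Z []) := h7
    calc ((n : ℝ) ^ (m + 1))⁻¹
          * ∑ s : Fin (m + 1) → Fin n, ‖D (List.ofFn s) - δstar‖ ^ 2
        ≤ (2 * τ / (n : ℝ)) * (θ ^ (m + 1) * Z []) := h5
      _ = ((2 * τ / (n : ℝ)) * Z []) * θ ^ (m + 1) := by ring
      _ ≤ (max (6 * σ) (2 * τ / (n : ℝ)) * Z []) * θ ^ (m + 1) :=
          mul_le_mul_of_nonneg_right h4 hθK
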